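/- Let S : ℝᵈ → ℝᵈ be a continuously differentiable involution (S ∘ S = id), π : ℝᵈ → [0, ∞) Lebesgue-integrable, J(z) := |det DS(z)|, α(z) := min{1, π(S(z))·J(z)/π(z)} for π(z) > 0 and α(z) := 1 otherwise, and P(z, ·) := α(z)·δ_{S(z)} + (1 − α(z))·δ_z. Then the measure π(z)dz is invariant under P: for every Borel set A ⊆ ℝᵈ, ∫_{ℝᵈ} P(z, A) π(z) dz = ∫_A π(z) dz. -/

import Mathlib

open Metric MeasureTheory Set

/-- **Invariance of `π(z)dz` under the Metropolis–Hastings kernel with deterministic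
involutive proposal.** With `S`, `π`, `J`, `α` as in the detailed-balance statement,
the measure `π(z)dz` is invariant: for every Borel `A`,
`∫ P(z, A) π(z) dz = ∫_A π(z) dz`. -/
theorem metropolis_involution_invariance
    (d : ℕ)
    (S : EuclideanSpace ℝ (Fin d) → EuclideanSpace ℝ (Fin d))
    (hS : ContDiff ℝ 1 S)
    (hinv : ∀ z, S (S z) = z)
    (π : EuclideanSpace ℝ (Fin d) → ℝ)
    (hπ0 : ∀ z, 0 ≤ π z)
    (hπint : MeasureTheory.Integrable π)
    (J : EuclideanSpace ℝ (Fin d) → ℝ)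
    (hJ : ∀ z, J z = |LinearMap.det ((fderiv ℝ S z).toLinearMap)|)
    (α : EuclideanSpace ℝ (Fin d) → ℝ)
    (hα : ∀ z, 0 < π z → α z = min 1 (π (S z) * J z / π z))
    (hα1 : ∀ z, π z = 0 → α z = 1) :
    ∀ A : Set (EuclideanSpace ℝ (Fin d)), MeasurableSet A →
      (∫ z,
        (α z * A.indicator (fun _ => (1:ℝ)) (S z)
          + (1 - α z) * A.indicator (fun _ => (1:ℝ)) z) * π z)
      = ∫ z in A, π z := by
  intro A hA
  have hSdiff : Differentiable ℝ S := hS.differentiable one_ne_zero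
  have hSinj : Function.Injective S := Function.LeftInverse.injective hinv
  have hScont : Continuous S := hS.continuous
  -- J z * J (S z) = 1
  have hJmul : ∀ z, J z * J (S z) = 1 := by
    intro z
    have hcomp : fderiv ℝ (S ∘ S) z = (fderiv ℝ S (S z)).comp (fderiv ℝ S z) :=
      fderiv_comp z (hSdiff (S z)) (hSdiff z)
    have hid : (S ∘ S) = id := funext hinv
    rw [hid, fderiv_id] at hcomp
    have hdet : LinearMap.det ((fderiv ℝ S (S z)).toLinearMap)
        * LinearMap.det ((fderiv ℝ S z).toLinearMap) = 1 := by
      have := congrArg (fun L : EuclideanSpace ℝ (Fin d) →L[ℝ] EuclideanSpace ℝ (Fin d) => LinearMap.det L.toLinearMap) hcomp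
      simpa [LinearMap.det_comp] using this.symm
    rw [hJ z, hJ (S z), ← abs_mul, mul_comm, hdet, abs_one]
  have hJ0 : ∀ z, 0 ≤ J z := fun z => (hJ z).symm ▸ abs_nonneg _
  -- the "min" function m = α * π
  set m : EuclideanSpace ℝ (Fin d) → ℝ := fun z => min (π z) (π (S z) * J z) with hm_def
  have hm0 : ∀ z, 0 ≤ m z := fun z => le_min (hπ0 z) (mul_nonneg (hπ0 (S z)) (hJ0 z))
  have hm_le : ∀ z, m z ≤ π z := fun z => min_le_left _ _
  have hm : ∀ z, α z * π z = m z := by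
    intro z
    rcases eq_or_lt_of_le (hπ0 z) with h | h
    · have h0 : π z = 0 := h.symm
      simp [hm_def, hα1 z h0, h0, min_eq_left (mul_nonneg (hπ0 (S z)) (hJ0 z))]
    · rw [hα z h, min_mul_of_nonneg _ _ (le_of_lt h), one_mul,
        div_mul_cancel₀ _ (ne_of_gt h)]
  -- detailed balance: J z * m (S z) = m z
  have hdb : ∀ z, J z * m (S z) = m z := by
    intro z
    have : J z * m (S z) = min (π (S z) * J z) (π z * (J z * J (S z))) := by
      simp only [hm_def, hinv]
      rw [mul_min_of_nonneg _ _ (hJ0 z)]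
      ring_nf
    rw [this, hJmul, mul_one, min_comm]
  -- measurability
  have hJcont : Continuous J := by
    have : Continuous fun z => fderiv ℝ S z := hS.continuous_fderiv one_ne_zero
    have := (ContinuousLinearMap.continuous_det.comp this).abs
    simpa [hJ] using this.congr (fun z => (hJ z).symm)
  obtain ⟨π', hπ'meas, hπ'ae⟩ := hπint.1
  -- S maps null sets to null sets, hence π ∘ S =ᵐ π' ∘ S
  have hnull : ∀ N : Set (EuclideanSpace ℝ (Fin d)), volume N = 0 → volume (S ⁻¹' N) = 0 := by
    intro N hN
    have himg : S ⁻¹' N = S '' N := by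
      ext z
      constructor
      · intro hz; exact ⟨S z, hz, hinv z⟩
      · rintro ⟨y, hy, rfl⟩; simpa [hinv] using hy
    rw [himg]
    exact addHaar_image_eq_zero_of_differentiableOn_of_addHaar_eq_zero volume
      (hSdiff.differentiableOn) hN
  have hπS : (fun z => π (S z)) =ᵐ[volume] fun z => π' (S z) := by
    have h1 : volume {z | π z ≠ π' z} = 0 := by
      have := hπ'ae
      rwa [Filter.EventuallyEq, ae_iff] at this
    have h2 : {z | π (S z) ≠ π' (S z)} ⊆ S ⁻¹' {z | π z ≠ π' z} := fun z hz => hz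
    rw [Filter.EventuallyEq, ae_iff]
    exact measure_mono_null h2 (hnull _ h1)
  set m' : EuclideanSpace ℝ (Fin d) → ℝ := fun z => min (π' z) (π' (S z) * J z) with hm'_def
  have hm'sm : StronglyMeasurable m' := by
    have h1 : Measurable π' := hπ'meas.measurable
    exact (h1.min ((h1.comp hScont.measurable).mul hJcont.measurable)).stronglyMeasurable
  have hmae : m =ᵐ[volume] m' := by
    filter_upwards [hπ'ae, hπS] with z h1 h2
    simp [hm_def, hm'_def, h1, h2]
  have hmAESM : AEStronglyMeasurable m volume := ⟨m', hm'sm, hmae⟩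
  -- the three pieces
  set I : EuclideanSpace ℝ (Fin d) → ℝ := A.indicator (fun _ => (1:ℝ)) with hI_def
  have hImeas : Measurable I := measurable_const.indicator hA
  have hI01 : ∀ z, 0 ≤ I z ∧ I z ≤ 1 := by
    intro z
    unfold I
    by_cases hz : z ∈ A <;> simp [hz]
  have hf1AESM : AEStronglyMeasurable (fun z => m z * I (S z)) volume :=
    hmAESM.mul ((hImeas.comp hScont.measurable).aestronglyMeasurable)
  have hf2AESM : AEStronglyMeasurable (fun z => m z * I z) volume :=
    hmAESM.mul hImeas.aestronglyMeasurable
  have hbound : ∀ (g : EuclideanSpace ℝ (Fin d) → ℝ), (∀ z, 0 ≤ g z ∧ g z ≤ 1) →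
      ∀ z, ‖m z * g z‖ ≤ ‖π z‖ := by
    intro g hg z
    rw [Real.norm_eq_abs, Real.norm_eq_abs, abs_of_nonneg (mul_nonneg (hm0 z) (hg z).1),
      abs_of_nonneg (hπ0 z)]
    calc m z * g z ≤ m z * 1 := by
          exact mul_le_mul_of_nonneg_left (hg z).2 (hm0 z)
      _ = m z := mul_one _
      _ ≤ π z := hm_le z
  have hf1int : Integrable (fun z => m z * I (S z)) volume :=
    hπint.mono hf1AESM (Filter.Eventually.of_forall
      (hbound (fun z => I (S z)) (fun z => hI01 (S z))))
  have hf2int : Integrable (fun z => m z * I z) volume :=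
    hπint.mono hf2AESM (Filter.Eventually.of_forall (hbound I hI01))
  have hf3int : Integrable (fun z => π z * I z) volume := by
    have : (fun z => π z * I z) = A.indicator π := by
      funext z
      unfold I
      by_cases hz : z ∈ A <;> simp [hz]
    rw [this]
    exact hπint.indicator hA
  -- change of variables
  have hCoV : (∫ z, m z * I (S z)) = ∫ z, m z * I z := by
    have himg : S '' univ = univ := by
      apply Set.eq_univ_of_forall
      intro y
      exact ⟨S y, trivial, hinv y⟩
    have := integral_image_eq_integral_abs_det_fderiv_smul volume MeasurableSet.univ
      (fun x _ => (hSdiff x).hasFDerivAt.hasFDerivWithinAt)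
      (hSinj.injOn) (fun z => m z * I (S z))
    rw [himg, Measure.restrict_univ] at this
    rw [this]
    apply integral_congr_ae
    filter_upwards with z
    have hdet : |(fderiv ℝ S z).det| = J z := (hJ z).symm
    simp only [smul_eq_mul, hinv, hdet]
    rw [show J z * (m (S z) * I z) = (J z * m (S z)) * I z by ring, hdb]
  -- put it all together
  have hsplit : ∀ z,
      (α z * I (S z) + (1 - α z) * I z) * π z
        = m z * I (S z) + (π z * I z - m z * I z) := by
    intro z
    have h1 : α z * π z = m z := hm z
    linear_combination (I (S z) - I z) * h1
  calc (∫ z, (α z * I (S z) + (1 - α z) * I z) * π z)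
      = ∫ z, (m z * I (S z) + (π z * I z - m z * I z)) := by
        exact integral_congr_ae (Filter.Eventually.of_forall hsplit)
    _ = (∫ z, m z * I (S z)) + ∫ z, (π z * I z - m z * I z) :=
        integral_add hf1int (hf3int.sub hf2int)
    _ = (∫ z, m z * I (S z)) + ((∫ z, π z * I z) - ∫ z, m z * I z) := by
        rw [integral_sub hf3int hf2int]
    _ = ∫ z, π z * I z := by rw [hCoV]; ring
    _ = ∫ z in A, π z := by
        rw [← integral_indicator hA]
        apply integral_congr_ae
        filter_upwards with z
        unfold I
        by_cases hz : z ∈ A <;> simp [hz]
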